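/- arXiv:2504.16762 — 3 statements merged into one kernel-verified Lean document; each statement's English description precedes it below -/
import Mathlib

section
/- Let T be a minimum-weight spanning arborescence converging to the root r in the extended large tilt graph of a board with sinks S. If (p₁, q) and (p₂, q) are two distinct inverse edges of T with the same head q, then q ∈ S (q is a sink). -/
open Classical in
/-- The four tilt directions: right, left, up, down. -/
def dirs : Finset (ℤ × ℤ) := {(1, 0), (-1, 0), (0, 1), (0, -1)}

/-- `TiltEnd B p d q`: starting at pixel `p` of the board `B` and moving in
direction `d`, the particle comes to rest at `q`, i.e. `q = p^d` is the extreme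
pixel of the maximal segment through `p` in direction `d`. -/
def TiltEnd (B : Finset (ℤ × ℤ)) (p d q : ℤ × ℤ) : Prop :=
  (∃ n : ℕ, q = p + n • d ∧ ∀ m : ℕ, m ≤ n → p + m • d ∈ B) ∧ q + d ∉ B

/-- The full tilt graph of a board `B`: edges `(p, p^x)` for each direction. -/
def GF (B : Finset (ℤ × ℤ)) (p q : ℤ × ℤ) : Prop :=
  p ∈ B ∧ ∃ d ∈ dirs, TiltEnd B p d q

/-- `p` and `q` lie in a common (maximal horizontal) row segment of `B`. -/
def SameRow (B : Finset (ℤ × ℤ)) (p q : ℤ × ℤ) : Prop :=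
  p ∈ B ∧ q ∈ B ∧ p.2 = q.2 ∧
    ∀ x : ℤ, min p.1 q.1 ≤ x → x ≤ max p.1 q.1 → (x, p.2) ∈ B

/-- `p` and `q` lie in a common (maximal vertical) column segment of `B`. -/
def SameCol (B : Finset (ℤ × ℤ)) (p q : ℤ × ℤ) : Prop :=
  p ∈ B ∧ q ∈ B ∧ p.1 = q.1 ∧
    ∀ y : ℤ, min p.2 q.2 ≤ y → y ≤ max p.2 q.2 → (p.1, y) ∈ B

/-- `R` is an axis-aligned rectangle of pixels whose upper-right cell is `a`. -/
def IsRect (R : Set (ℤ × ℤ)) (a : ℤ × ℤ) : Prop :=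
  ∃ x₁ y₁ : ℤ, x₁ ≤ a.1 ∧ y₁ ≤ a.2 ∧
    R = {v | x₁ ≤ v.1 ∧ v.1 ≤ a.1 ∧ y₁ ≤ v.2 ∧ v.2 ≤ a.2}

/-- `a` is the anchor `p†` of `p`: `a` is the unique vertex of the large tilt
graph vertex set `VL` in a rectangle of pixels of `B` containing `p`, adjacent
on the inside to the rectangle's upper-right corner. -/
def IsAnchor (B : Finset (ℤ × ℤ)) (VL : Set (ℤ × ℤ)) (p a : ℤ × ℤ) : Prop :=
  a ∈ VL ∧ ∃ R : Set (ℤ × ℤ), IsRect R a ∧ R ⊆ ↑B ∧ p ∈ R ∧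
    ∀ v ∈ R, v ∈ VL → v = a

/-- `VL` is a valid vertex set for the large tilt graph of board `B` with sinks
`S`: it consists of pixels, contains all sinks, is closed under tilt moves
(so it contains the tilt images of sinks and the segment endpoints it needs),
and is closed under intersections of row and column segments through its
vertices. -/
structure LargeTiltSet (B : Finset (ℤ × ℤ)) (S VL : Set (ℤ × ℤ)) : Prop where
  subset : VL ⊆ ↑B
  sinks : S ⊆ VL
  tiltClosed : ∀ v ∈ VL, ∀ d ∈ dirs, ∀ q, TiltEnd B v d q → q ∈ VL
  interClosed : ∀ a ∈ VL, ∀ b ∈ VL, ∀ c, SameRow B a c → SameCol B b c → c ∈ VL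

/-- The large tilt graph: the subgraph of the full tilt graph induced by `VL`. -/
def GLarge (B : Finset (ℤ × ℤ)) (VL : Set (ℤ × ℤ)) (p q : ℤ × ℤ) : Prop :=
  p ∈ VL ∧ q ∈ VL ∧ GF B p q

/-- The extended graph of a graph `G` with sink set `S`, with fresh root
`none`: edges of `G`, inverse edges for missing reverses, and sink-to-root
edges. -/
def ExtR {α : Type*} (G : α → α → Prop) (S : Set α) : Option α → Option α → Prop
  | some p, some q => G p q ∨ (G q p ∧ ¬ G p q)
  | some s, none => s ∈ S
  | none, _ => False

open Classical in
/-- Weights in the extended graph: edges of `G` and sink-to-root edges have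
weight 0, inverse edges have weight 1. -/
noncomputable def wR {α : Type*} (G : α → α → Prop) : α → Option α → ℕ
  | p, some q => if G p q then 0 else 1
  | _, none => 0

/-- One step along the parent function `f`, the root `none` is absorbing. -/
def ostep {α : Type*} (f : α → Option α) : Option α → Option α
  | some v => f v
  | none => none

/-- `f` is a spanning arborescence on the vertex set `D` converging to the
root `none`: every vertex of `D` has its unique outgoing edge in `G` and
reaches the root. -/
def IsArbOn {α : Type*} (D : Finset α) (G : Option α → Option α → Prop)
    (f : α → Option α) : Prop :=
  (∀ v ∈ D, G (some v) (f v)) ∧ ∀ v ∈ D, ∃ n : ℕ, (ostep f)^[n] (some v) = none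

/-- Total weight of an arborescence on vertex set `D`. -/
def weightOn {α : Type*} [DecidableEq α] (D : Finset α) (w : α → Option α → ℕ)
    (f : α → Option α) : ℕ :=
  ∑ v ∈ D, w v (f v)

/-- Minimum-weight spanning arborescence on `D` converging to the root. -/
def IsMinArbOn {α : Type*} [DecidableEq α] (D : Finset α)
    (G : Option α → Option α → Prop) (w : α → Option α → ℕ) (f : α → Option α) : Prop :=
  IsArbOn D G f ∧ ∀ g : α → Option α, IsArbOn D G g → weightOn D w f ≤ weightOn D w g


section AuxStmt9

@[simp] lemma ostep_some' {α : Type*} (f : α → Option α) (v : α) :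
    ostep f (some v) = f v := rfl

lemma ostep_none_iter {α : Type*} (f : α → Option α) (m : ℕ) :
    (ostep f)^[m] none = none :=
  Function.iterate_fixed rfl m

lemma no_cycle {α : Type*} {f : α → Option α} {p : α} {k n : ℕ} (hk : 0 < k)
    (hcyc : (ostep f)^[k] (some p) = some p)
    (hn : (ostep f)^[n] (some p) = none) : False := by
  have hper : ∀ j : ℕ, (ostep f)^[j * k] (some p) = some p := by
    intro j
    induction j with
    | zero => simp
    | succ j ih => rw [Nat.succ_mul, Function.iterate_add_apply, hcyc, ih]
  have hle : n ≤ n * k := Nat.le_mul_of_pos_right n hk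
  have hnone : (ostep f)^[n * k] (some p) = none := by
    have h := (Function.iterate_add_apply (ostep f) (n * k - n) n (some p)).symm
    rw [Nat.sub_add_cancel hle] at h
    rw [← h, hn, ostep_none_iter]
  rw [hper n] at hnone
  exact Option.some_ne_none p hnone

lemma avoid_and_reach {α : Type*} {f : α → Option α} {p t : α} {a : ℕ} (ha : 0 < a)
    (hpt : (ostep f)^[a] (some p) = some t)
    (hreach : ∃ n, (ostep f)^[n] (some p) = none) :
    (∀ j, (ostep f)^[j] (some t) ≠ some p) ∧ ∃ n, (ostep f)^[n] (some t) = none := by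
  obtain ⟨n, hn⟩ := hreach
  constructor
  · intro j hj
    refine no_cycle (k := j + a) (by omega) ?_ hn
    rw [Function.iterate_add_apply, hpt, hj]
  · refine ⟨n, ?_⟩
    calc (ostep f)^[n] (some t) = (ostep f)^[n] ((ostep f)^[a] (some p)) := by rw [hpt]
      _ = (ostep f)^[a] ((ostep f)^[n] (some p)) := by
            rw [← Function.iterate_add_apply, ← Function.iterate_add_apply, Nat.add_comm]
      _ = none := by rw [hn, ostep_none_iter]

lemma reach_avoid {α : Type*} [DecidableEq α] {f : α → Option α} {p : α} {t : Option α} :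
    ∀ (k : ℕ) (v : Option α), (ostep f)^[k] v = none →
      (∀ j, j < k → (ostep f)^[j] v ≠ some p) →
      (ostep (Function.update f p t))^[k] v = none := by
  intro k
  induction k with
  | zero => intro v h _; exact h
  | succ k ih =>
    intro v h havoid
    have hv : v ≠ some p := by simpa using havoid 0 k.succ_pos
    have hstep : ostep (Function.update f p t) v = ostep f v := by
      cases v with
      | none => rfl
      | some u =>
        have hu : u ≠ p := fun h' => hv (by rw [h'])
        simp [ostep, Function.update_of_ne hu]
    rw [Function.iterate_succ_apply, hstep]
    rw [Function.iterate_succ_apply] at h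
    refine ih _ h (fun j hj => ?_)
    have := havoid (j + 1) (Nat.succ_lt_succ hj)
    rwa [Function.iterate_succ_apply] at this

lemma reach_update {α : Type*} [DecidableEq α] {f : α → Option α} {p : α} {t : Option α}
    (hp : ∃ m, (ostep (Function.update f p t))^[m] (some p) = none) :
    ∀ (n : ℕ) (v : Option α), (ostep f)^[n] v = none →
      ∃ m, (ostep (Function.update f p t))^[m] v = none := by
  intro n
  induction n with
  | zero => intro v h; exact ⟨0, h⟩
  | succ n ih =>
    intro v h
    cases v with
    | none => exact ⟨0, rfl⟩
    | some u =>
      by_cases hu : u = p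
      · subst hu; exact hp
      · rw [Function.iterate_succ_apply] at h
        obtain ⟨m, hm⟩ := ih _ h
        refine ⟨m + 1, ?_⟩
        rw [Function.iterate_succ_apply]
        have hstep : ostep (Function.update f p t) (some u) = f u := by
          simp [ostep, Function.update_of_ne hu]
        rw [hstep]
        exact hm

open Classical in
lemma reroute_lemma (B S VL : Finset (ℤ × ℤ)) (f : ℤ × ℤ → Option (ℤ × ℤ))
    (hmin : IsMinArbOn VL (ExtR (GLarge B ↑VL) ↑S) (wR (GLarge B ↑VL)) f)
    (p t q : ℤ × ℤ) (hp : p ∈ VL) (hfp : f p = some q)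
    (hw : ¬ GLarge B ↑VL p q) (ht : GLarge B ↑VL p t)
    (havoid : ∀ j, (ostep f)^[j] (some t) ≠ some p)
    (hreach : ∃ n, (ostep f)^[n] (some t) = none) : False := by
  set g := Function.update f p (some t) with hg
  obtain ⟨n, hn⟩ := hreach
  have hgn : (ostep g)^[n] (some t) = none :=
    reach_avoid n _ hn (fun j _ => havoid j)
  have hgp : ∃ m, (ostep g)^[m] (some p) = none := by
    refine ⟨n + 1, ?_⟩
    rw [Function.iterate_succ_apply]
    have hgps : ostep g (some p) = some t := by
      simp [ostep, hg, Function.update_self]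
    rw [hgps]
    exact hgn
  have harb : IsArbOn VL (ExtR (GLarge B ↑VL) ↑S) g := by
    constructor
    · intro v hv
      by_cases hvp : v = p
      · subst hvp
        have hgv : g v = some t := by simp [hg, Function.update_self]
        rw [hgv]
        exact Or.inl ht
      · rw [hg, Function.update_of_ne hvp]
        exact hmin.1.1 v hv
    · intro v hv
      obtain ⟨m, hm⟩ := hmin.1.2 v hv
      exact reach_update hgp m _ hm
  have hlt : weightOn VL (wR (GLarge B ↑VL)) g < weightOn VL (wR (GLarge B ↑VL)) f := by
    unfold weightOn
    apply Finset.sum_lt_sum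
    · intro v hv
      by_cases hvp : v = p
      · subst hvp
        rw [hg, Function.update_self, hfp]
        simp [wR, hw, ht]
      · rw [hg, Function.update_of_ne hvp]
    · refine ⟨p, hp, ?_⟩
      rw [hg, Function.update_self, hfp]
      simp [wR, hw, ht]
  exact absurd (hmin.2 g harb) (not_le.mpr hlt)

lemma neg_mem_dirs {d : ℤ × ℤ} (h : d ∈ dirs) : -d ∈ dirs := by
  fin_cases h <;> decide

lemma dirs_ne_zero {d : ℤ × ℤ} (h : d ∈ dirs) : d ≠ 0 := by
  fin_cases h <;> decide

lemma dirs_cover {d₁ d₂ : ℤ × ℤ} (h₁ : d₁ ∈ dirs) (h₂ : d₂ ∈ dirs)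
    (hne : d₁ ≠ d₂) (hne' : d₂ ≠ -d₁) :
    ∀ e ∈ dirs, e = d₁ ∨ e = -d₁ ∨ e = d₂ ∨ e = -d₂ := by
  intro e he
  fin_cases h₁ <;> fin_cases h₂ <;> fin_cases he <;> revert hne hne' <;> decide

lemma mem_of_tiltEnd {B : Finset (ℤ × ℤ)} {q d p : ℤ × ℤ}
    (h : TiltEnd B q d p) : p ∈ B := by
  obtain ⟨⟨n, hp, hseg⟩, -⟩ := h
  rw [hp]
  exact hseg n le_rfl

lemma tiltEnd_unique {B : Finset (ℤ × ℤ)} {p d q q' : ℤ × ℤ} (hd : d ≠ 0)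
    (h : TiltEnd B p d q) (h' : TiltEnd B p d q') : q = q' := by
  obtain ⟨⟨n, hq, hseg⟩, hout⟩ := h
  obtain ⟨⟨n', hq', hseg'⟩, hout'⟩ := h'
  have h1 : ¬ n < n' := fun hlt => hout (by
    have hb := hseg' (n + 1) hlt
    rwa [succ_nsmul, ← add_assoc, ← hq] at hb)
  have h2 : ¬ n' < n := fun hlt => hout' (by
    have hb := hseg (n' + 1) hlt
    rwa [succ_nsmul, ← add_assoc, ← hq'] at hb)
  have hnn : n = n' := by omega
  rw [hq, hq', hnn]

lemma tilt_self {B : Finset (ℤ × ℤ)} {q d : ℤ × ℤ} (hq : q ∈ B)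
    (hout : q + -d ∉ B) : TiltEnd B q (-d) q := by
  refine ⟨⟨0, by simp, fun m hm => ?_⟩, hout⟩
  obtain rfl := Nat.le_zero.mp hm
  simpa using hq

lemma tilt_extend {B : Finset (ℤ × ℤ)} {q p t d : ℤ × ℤ}
    (h : TiltEnd B q d p) (h' : TiltEnd B q (-d) t) : TiltEnd B p (-d) t := by
  obtain ⟨⟨n, hp, hseg⟩, -⟩ := h
  obtain ⟨⟨k, ht, hseg'⟩, hout⟩ := h'
  refine ⟨⟨n + k, ?_, ?_⟩, hout⟩
  · rw [hp, ht]
    module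
  · intro m hm
    by_cases hmn : m ≤ n
    · have hb := hseg (n - m) (Nat.sub_le n m)
      have harith : p + m • (-d) = q + (n - m) • d := by
        rw [hp]
        obtain ⟨j, rfl⟩ : ∃ j, n = j + m := ⟨n - m, by omega⟩
        rw [Nat.add_sub_cancel]
        module
      rwa [harith]
    · have hb := hseg' (m - n) (by omega)
      have harith : p + m • (-d) = q + (m - n) • (-d) := by
        rw [hp]
        obtain ⟨j, rfl⟩ : ∃ j, m = j + n := ⟨m - n, by omega⟩
        rw [Nat.add_sub_cancel]
        module
      rwa [harith]

end AuxStmt9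

/-- If a minimum-weight arborescence of the extended large tilt graph contains
two distinct inverse edges `(p₁, q)` and `(p₂, q)` with the same head `q`,
then `q` is a sink. -/
theorem stmt9 (B S VL : Finset (ℤ × ℤ))
    (hVL : LargeTiltSet B ↑S ↑VL)
    (f : ℤ × ℤ → Option (ℤ × ℤ))
    (hmin : IsMinArbOn VL (ExtR (GLarge B ↑VL) ↑S) (wR (GLarge B ↑VL)) f)
    (p₁ p₂ q : ℤ × ℤ) (hp₁ : p₁ ∈ VL) (hp₂ : p₂ ∈ VL) (hne : p₁ ≠ p₂)
    (he₁ : f p₁ = some q) (he₂ : f p₂ = some q)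
    (hinv₁ : GLarge B ↑VL q p₁ ∧ ¬ GLarge B ↑VL p₁ q)
    (hinv₂ : GLarge B ↑VL q p₂ ∧ ¬ GLarge B ↑VL p₂ q) :
    q ∈ S := by
  by_contra hqS
  obtain ⟨hinv₁, hninv₁⟩ := hinv₁
  obtain ⟨hinv₂, hninv₂⟩ := hinv₂
  obtain ⟨hqVL, hp₁VL, hqB, d₁, hd₁, hT₁⟩ := hinv₁
  obtain ⟨-, hp₂VL, -, d₂, hd₂, hT₂⟩ := hinv₂
  have hd₁0 := dirs_ne_zero hd₁
  have hd₂0 := dirs_ne_zero hd₂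
  have hp₁B : p₁ ∈ B := mem_of_tiltEnd hT₁
  have hp₂B : p₂ ∈ B := mem_of_tiltEnd hT₂
  -- backward neighbours of q are in B
  have hback : ∀ {p d : ℤ × ℤ}, d ∈ dirs → TiltEnd B q d p → p ∈ (VL : Set (ℤ × ℤ)) →
      ¬ GLarge B ↑VL p q → q + -d ∈ B := by
    intro p d hd hT hpVL hnn
    by_contra hout
    exact hnn ⟨hpVL, hqVL, mem_of_tiltEnd hT, -d, neg_mem_dirs hd,
      tilt_extend hT (tilt_self hqB hout)⟩
  have hB1 : q + -d₁ ∈ B := hback hd₁ hT₁ hp₁VL hninv₁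
  have hB2 : q + -d₂ ∈ B := hback hd₂ hT₂ hp₂VL hninv₂
  -- forward neighbours of q are in B
  have hfwd : ∀ {p d : ℤ × ℤ}, d ∈ dirs → TiltEnd B q d p → p ∈ (VL : Set (ℤ × ℤ)) →
      ¬ GLarge B ↑VL p q → q + d ∈ B := by
    intro p d hd hT hpVL hnn
    obtain ⟨⟨n, hpe, hseg⟩, hout⟩ := hT
    rcases Nat.eq_zero_or_pos n with rfl | hpos
    · have hpq : p = q := by simpa using hpe
      subst hpq
      exact absurd ⟨hpVL, hqVL, hqB, d, hd, ⟨⟨0, hpe, hseg⟩, hout⟩⟩ hnn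
    · have hb := hseg 1 hpos
      simpa using hb
  have hB3 : q + d₁ ∈ B := hfwd hd₁ hT₁ hp₁VL hninv₁
  have hB4 : q + d₂ ∈ B := hfwd hd₂ hT₂ hp₂VL hninv₂
  have hdne : d₁ ≠ d₂ := by
    rintro rfl
    exact hne (tiltEnd_unique hd₁0 hT₁ hT₂)
  have hreach₁ := hmin.1.2 p₁ hp₁
  have hreach₂ := hmin.1.2 p₂ hp₂
  by_cases hcol : d₂ = -d₁
  · -- the two inverse edges are collinear: reroute p₁ to p₂
    subst hcol
    have havoid : ∀ j, (ostep f)^[j] (some p₂) ≠ some p₁ := by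
      intro j hj
      match j, hj with
      | 0, hj => exact hne (Option.some_injective _ hj.symm)
      | j + 1, hj =>
        obtain ⟨n, hn⟩ := hreach₁
        refine no_cycle (k := j + 1) j.succ_pos ?_ hn
        rw [Function.iterate_succ_apply] at hj ⊢
        rw [ostep_some', he₂] at hj
        rw [ostep_some', he₁]
        exact hj
    exact reroute_lemma B S VL f hmin p₁ p₂ q hp₁ he₁ hninv₁
      ⟨hp₁VL, hp₂VL, hp₁B, -d₁, neg_mem_dirs hd₁, tilt_extend hT₁ hT₂⟩
      havoid hreach₂
  · -- perpendicular inverse edges: all four neighbours of q are in B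
    have hcover := dirs_cover hd₁ hd₂ hdne hcol
    have hallB : ∀ e ∈ dirs, q + e ∈ B := by
      intro e he
      rcases hcover e he with rfl | rfl | rfl | rfl
      exacts [hB3, hB1, hB4, hB2]
    have hqVL' : q ∈ VL := hqVL
    have hedge := hmin.1.1 q hqVL'
    cases hfq : f q with
    | none =>
      rw [hfq] at hedge
      exact hqS hedge
    | some q' =>
      rw [hfq] at hedge
      rcases hedge with hQ | ⟨hQ', -⟩
      · obtain ⟨-, hq'VL, -, e, he, hTE⟩ := hQ
        have h2iter : ∀ r, f r = some q → (ostep f)^[2] (some r) = some q' := by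
          intro r hr
          show ostep f (ostep f (some r)) = some q'
          rw [ostep_some', hr, ostep_some', hfq]
        rcases hcover e he with rfl | rfl | rfl | rfl
        · -- e = d₁ : two-cycle p₁ → q → p₁
          have hq'p : q' = p₁ := tiltEnd_unique hd₁0 hTE hT₁
          obtain ⟨n, hn⟩ := hreach₁
          have hcyc := h2iter p₁ he₁
          rw [hq'p] at hcyc
          exact no_cycle (k := 2) (by norm_num) hcyc hn
        · -- e = -d₁ : reroute p₁ to q'
          obtain ⟨hav, hre⟩ := avoid_and_reach (a := 2) (by norm_num) (h2iter p₁ he₁) hreach₁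
          exact reroute_lemma B S VL f hmin p₁ q' q hp₁ he₁ hninv₁
            ⟨hp₁VL, hq'VL, hp₁B, -d₁, neg_mem_dirs hd₁, tilt_extend hT₁ hTE⟩ hav hre
        · -- e = d₂ : two-cycle p₂ → q → p₂
          have hq'p : q' = p₂ := tiltEnd_unique hd₂0 hTE hT₂
          obtain ⟨n, hn⟩ := hreach₂
          have hcyc := h2iter p₂ he₂
          rw [hq'p] at hcyc
          exact no_cycle (k := 2) (by norm_num) hcyc hn
        · -- e = -d₂ : reroute p₂ to q'
          obtain ⟨hav, hre⟩ := avoid_and_reach (a := 2) (by norm_num) (h2iter p₂ he₂) hreach₂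
          exact reroute_lemma B S VL f hmin p₂ q' q hp₂ he₂ hninv₂
            ⟨hp₂VL, hq'VL, hp₂B, -d₂, neg_mem_dirs hd₂, tilt_extend hT₂ hTE⟩ hav hre
      · obtain ⟨-, -, -, e, he, ⟨-, hout⟩⟩ := hQ'
        exact hout (hallB e he)
end

section
/- Let (p₁, q₁) and (p₂, q₂) be two distinct inverse edges in a minimum-weight spanning arborescence T (converging to root r) of the extended large tilt graph, such that the heads q₁ and q₂ lie in the same row segment R of the board. Then at most one of the tails p₁, p₂ lies in R. -/
/-! ### Auxiliary lemmas for stmt10 -/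

lemma aux_ostep_none {α : Type*} (f : α → Option α) (n : ℕ) :
    (ostep f)^[n] none = none := by
  induction n with
  | zero => rfl
  | succ n ih => rw [Function.iterate_succ_apply]; exact ih

lemma aux_sameRow_symm {B : Finset (ℤ × ℤ)} {a b : ℤ × ℤ} (h : SameRow B a b) :
    SameRow B b a := by
  obtain ⟨ha, hb, hy, hseg⟩ := h
  refine ⟨hb, ha, hy.symm, fun x h1 h2 => ?_⟩
  have := hseg x (by omega) (by omega)
  rwa [hy] at this

lemma aux_sameRow_trans {B : Finset (ℤ × ℤ)} {a b c : ℤ × ℤ}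
    (h1 : SameRow B a c) (h2 : SameRow B b c) : SameRow B a b := by
  obtain ⟨ha, hc, hy1, hs1⟩ := h1
  obtain ⟨hb, -, hy2, hs2⟩ := h2
  refine ⟨ha, hb, by omega, fun x hx1 hx2 => ?_⟩
  rcases le_total x c.1 with h | h
  · rcases le_total a.1 b.1 with hab | hab
    · exact hs1 x (by omega) (by omega)
    · have := hs2 x (by omega) (by omega)
      rwa [hy2, ← hy1] at this
  · rcases le_total a.1 b.1 with hab | hab
    · have := hs2 x (by omega) (by omega)
      rwa [hy2, ← hy1] at this
    · exact hs1 x (by omega) (by omega)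

lemma aux_boundary {B : Finset (ℤ × ℤ)} {VL : Finset (ℤ × ℤ)} {p q : ℤ × ℤ}
    (hG : GLarge B ↑VL q p) (hnG : ¬ GLarge B ↑VL p q) (hrow : SameRow B p q) :
    ∃ ε : ℤ, (ε = 1 ∨ ε = -1) ∧ 0 ≤ ε * (p.1 - q.1) ∧ (p.1 + ε, p.2) ∉ B := by
  have hy : p.2 = q.2 := hrow.2.2.1
  have hne : p ≠ q := by rintro rfl; exact hnG hG
  obtain ⟨hqV, hpV, hqB, d, hd, ⟨⟨n, hpn, hseg⟩, hout⟩⟩ := hG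
  have hc : p.1 = q.1 + (n : ℤ) * d.1 ∧ p.2 = q.2 + (n : ℤ) * d.2 := by
    rw [hpn]; simp [Prod.ext_iff]
  simp only [dirs, Finset.mem_insert, Finset.mem_singleton] at hd
  rcases hd with rfl | rfl | rfl | rfl
  · refine ⟨1, Or.inl rfl, by simp at hc; omega, ?_⟩
    have : (p.1 + 1, p.2) = p + ((1 : ℤ), (0 : ℤ)) := by simp [Prod.ext_iff]
    rw [this]; exact hout
  · refine ⟨-1, Or.inr rfl, by simp at hc; omega, ?_⟩
    have : (p.1 + -1, p.2) = p + ((-1 : ℤ), (0 : ℤ)) := by simp [Prod.ext_iff]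
    rw [this]; exact hout
  · exfalso; apply hne; simp at hc
    have : n = 0 := by omega
    apply Prod.ext <;> omega
  · exfalso; apply hne; simp at hc
    have : n = 0 := by omega
    apply Prod.ext <;> omega
lemma aux_tiltEnd_horiz {B : Finset (ℤ × ℤ)} {p q : ℤ × ℤ} {ε : ℤ}
    (hε : ε = 1 ∨ ε = -1) (hy : q.2 = p.2) (hle : 0 ≤ ε * (q.1 - p.1))
    (hseg : ∀ x : ℤ, min p.1 q.1 ≤ x → x ≤ max p.1 q.1 → (x, p.2) ∈ B)
    (hb : (q.1 + ε, q.2) ∉ B) : TiltEnd B p (ε, 0) q := by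
  constructor
  · refine ⟨(ε * (q.1 - p.1)).toNat, ?_, ?_⟩
    · have ht : ((ε * (q.1 - p.1)).toNat : ℤ) = ε * (q.1 - p.1) :=
        Int.toNat_of_nonneg hle
      apply Prod.ext <;> simp
      · rcases hε with rfl | rfl <;> omega
      · exact hy
    · intro m hm
      have hm' : (m : ℤ) ≤ ε * (q.1 - p.1) := by
        have ht : ((ε * (q.1 - p.1)).toNat : ℤ) = ε * (q.1 - p.1) :=
          Int.toNat_of_nonneg hle
        omega
      have he : p + m • ((ε : ℤ), (0 : ℤ)) = (p.1 + m * ε, p.2) := by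
        simp [Prod.ext_iff]
      rw [he]
      rcases hε with rfl | rfl <;> exact hseg _ (by omega) (by omega)
  · have he : q + ((ε : ℤ), (0 : ℤ)) = (q.1 + ε, q.2) := by simp [Prod.ext_iff]
    rw [he]; exact hb

lemma aux_cycle_absurd {α : Type*} (f : α → Option α) (a b : α) (n m N : ℕ)
    (h1 : (ostep f)^[n] (some a) = some b) (h2 : (ostep f)^[m] (some b) = some a)
    (hpos : 0 < n + m) (hN : (ostep f)^[N] (some a) = none) : False := by
  have hcyc : (ostep f)^[n + m] (some a) = some a := by
    rw [Nat.add_comm, Function.iterate_add_apply, h1, h2]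
  have key : ∀ k : ℕ, (ostep f)^[k * (n + m)] (some a) = some a := by
    intro k
    induction k with
    | zero => simp
    | succ k ih => rw [Nat.succ_mul, Function.iterate_add_apply, hcyc, ih]
  have hge : N ≤ N * (n + m) := Nat.le_mul_of_pos_right N hpos
  have : (ostep f)^[N * (n + m)] (some a) = none := by
    have : N * (n + m) = (N * (n + m) - N) + N := by omega
    rw [this, Function.iterate_add_apply, hN, aux_ostep_none]
  rw [key N] at this
  exact Option.some_ne_none _ this

lemma aux_swap {α : Type*} [DecidableEq α] (D : Finset α)
    (G : Option α → Option α → Prop) (w : α → Option α → ℕ) (f : α → Option α)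
    (hmin : IsMinArbOn D G w f) (p p' : α) (hp : p ∈ D) (hp' : p' ∈ D)
    (hedge : G (some p) (some p')) (hw : w p (some p') < w p (f p))
    (hpath : ∀ n, (ostep f)^[n] (some p') ≠ some p) : False := by
  classical
  set g := Function.update f p (some p') with hg
  have hgp : g p = some p' := Function.update_self _ _ _
  have hgv : ∀ v, v ≠ p → g v = f v := fun v h => Function.update_of_ne h _ _
  have hagree : ∀ n, (ostep g)^[n] (some p') = (ostep f)^[n] (some p') := by
    intro n
    induction n with
    | zero => rfl
    | succ n ih =>
      rw [Function.iterate_succ_apply', Function.iterate_succ_apply', ih]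
      cases h : (ostep f)^[n] (some p') with
      | none => rfl
      | some v =>
        have hvp : v ≠ p := by
          rintro rfl; exact hpath n h
        show g v = f v
        exact hgv v hvp
  have hreachp' : ∃ n, (ostep g)^[n] (some p') = none := by
    obtain ⟨n, hn⟩ := hmin.1.2 p' hp'
    exact ⟨n, by rw [hagree]; exact hn⟩
  have hreachp : ∃ n, (ostep g)^[n] (some p) = none := by
    obtain ⟨n, hn⟩ := hreachp'
    refine ⟨n + 1, ?_⟩
    rw [Function.iterate_succ_apply]
    show (ostep g)^[n] (g p) = none
    rw [hgp]; exact hn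
  have hreach : ∀ n : ℕ, ∀ v : α, (ostep f)^[n] (some v) = none →
      ∃ m, (ostep g)^[m] (some v) = none := by
    intro n
    induction n with
    | zero => intro v hv; exact absurd hv (by simp)
    | succ n ih =>
      intro v hv
      by_cases hvp : v = p
      · subst hvp; exact hreachp
      · rw [Function.iterate_succ_apply] at hv
        cases hfv : f v with
        | none =>
          refine ⟨1, ?_⟩
          show ostep g (some v) = none
          show g v = none
          rw [hgv v hvp, hfv]
        | some u =>
          have : (ostep f)^[n] (some u) = none := by
            rw [show ostep f (some v) = f v from rfl, hfv] at hv; exact hv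
          obtain ⟨m, hm⟩ := ih u this
          refine ⟨m + 1, ?_⟩
          rw [Function.iterate_succ_apply]
          show (ostep g)^[m] (g v) = none
          rw [hgv v hvp, hfv]; exact hm
  have harb : IsArbOn D G g := by
    constructor
    · intro v hv
      by_cases hvp : v = p
      · subst hvp; rw [hgp]; exact hedge
      · rw [hgv v hvp]; exact hmin.1.1 v hv
    · intro v hv
      obtain ⟨n, hn⟩ := hmin.1.2 v hv
      exact hreach n v hn
  have hlt : weightOn D w g < weightOn D w f := by
    apply Finset.sum_lt_sum
    · intro i hi
      by_cases hip : i = p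
      · subst hip; rw [hgp]; exact le_of_lt hw
      · rw [hgv i hip]
    · exact ⟨p, hp, by rw [hgp]; exact hw⟩
  exact absurd (hmin.2 g harb) (by omega)
/-- For two distinct inverse edges `(p₁, q₁)` and `(p₂, q₂)` in a
minimum-weight arborescence of the extended large tilt graph with heads `q₁`,
`q₂` in a common row segment `R`, at most one of the tails `p₁`, `p₂` lies
in `R`. -/
theorem stmt10 (B S VL : Finset (ℤ × ℤ))
    (hVL : LargeTiltSet B ↑S ↑VL)
    (f : ℤ × ℤ → Option (ℤ × ℤ))
    (hmin : IsMinArbOn VL (ExtR (GLarge B ↑VL) ↑S) (wR (GLarge B ↑VL)) f)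
    (p₁ q₁ p₂ q₂ : ℤ × ℤ) (hp₁ : p₁ ∈ VL) (hp₂ : p₂ ∈ VL)
    (he₁ : f p₁ = some q₁) (he₂ : f p₂ = some q₂)
    (hinv₁ : GLarge B ↑VL q₁ p₁ ∧ ¬ GLarge B ↑VL p₁ q₁)
    (hinv₂ : GLarge B ↑VL q₂ p₂ ∧ ¬ GLarge B ↑VL p₂ q₂)
    (hne : (p₁, q₁) ≠ (p₂, q₂))
    (hrow : SameRow B q₁ q₂) :
    ¬ (SameRow B p₁ q₁ ∧ SameRow B p₂ q₁) := by
  rintro ⟨h1, h2⟩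
  have hpne : p₁ ≠ p₂ := by
    rintro rfl
    rw [he₁] at he₂
    exact hne (by rw [Option.some.injEq] at he₂; rw [he₂])
  have hy1 : p₁.2 = q₁.2 := h1.2.2.1
  have hy2 : p₂.2 = q₁.2 := h2.2.2.1
  obtain ⟨ε₁, hε₁, hs₁, hb₁⟩ := aux_boundary hinv₁.1 hinv₁.2 h1
  have h2' : SameRow B p₂ q₂ := aux_sameRow_trans h2 (aux_sameRow_symm hrow)
  obtain ⟨ε₂, hε₂, hs₂, hb₂⟩ := aux_boundary hinv₂.1 hinv₂.2 h2'
  have hP : SameRow B p₁ p₂ := aux_sameRow_trans h1 h2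
  have hcov : ∀ x : ℤ, min p₁.1 p₂.1 ≤ x → x ≤ max p₁.1 p₂.1 → (x, p₁.2) ∈ B :=
    hP.2.2.2
  have hq2 : q₂.2 = q₁.2 := hrow.2.2.1.symm
  have hyy : p₂.2 = p₁.2 := by omega
  have hx12 : p₁.1 ≠ p₂.1 := by
    intro hx
    exact hpne (Prod.ext hx hyy.symm)
  -- both tilt edges between p₁ and p₂ exist
  have hboth : GLarge B ↑VL p₁ p₂ ∧ GLarge B ↑VL p₂ p₁ := by
    have hd1 : ((1:ℤ), (0:ℤ)) ∈ dirs := by simp [dirs]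
    have hdm1 : ((-1:ℤ), (0:ℤ)) ∈ dirs := by simp [dirs]
    have hcov' : ∀ x : ℤ, min p₂.1 p₁.1 ≤ x → x ≤ max p₂.1 p₁.1 → (x, p₂.2) ∈ B := by
      intro x hx1 hx2
      rw [hyy]
      exact hcov x (by omega) (by omega)
    rcases hε₁ with rfl | rfl <;> rcases hε₂ with rfl | rfl
    · -- both right-boundary: p₁ = p₂, contradiction
      exfalso
      rcases lt_or_gt_of_ne hx12 with h | h
      · exact hb₁ (hcov (p₁.1 + 1) (by omega) (by omega))
      · exact hb₂ (by rw [hyy]; exact hcov (p₂.1 + 1) (by omega) (by omega))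
    · -- p₁ right boundary, p₂ left boundary
      have hle : p₂.1 ≤ p₁.1 := by
        by_contra h
        exact hb₂ (by rw [hyy]; exact hcov (p₂.1 + -1) (by omega) (by omega))
      refine ⟨⟨hp₁, hp₂, h1.1, ⟨(-1, 0), hdm1, ?_⟩⟩, ⟨hp₂, hp₁, h2.1, ⟨(1, 0), hd1, ?_⟩⟩⟩
      · exact aux_tiltEnd_horiz (Or.inr rfl) hyy (by omega) hcov hb₂
      · exact aux_tiltEnd_horiz (Or.inl rfl) hyy.symm (by omega) hcov' hb₁
    · -- p₁ left boundary, p₂ right boundary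
      have hle : p₁.1 ≤ p₂.1 := by
        by_contra h
        exact hb₁ (hcov (p₁.1 + -1) (by omega) (by omega))
      refine ⟨⟨hp₁, hp₂, h1.1, ⟨(1, 0), hd1, ?_⟩⟩, ⟨hp₂, hp₁, h2.1, ⟨(-1, 0), hdm1, ?_⟩⟩⟩
      · exact aux_tiltEnd_horiz (Or.inl rfl) hyy (by omega) hcov hb₂
      · exact aux_tiltEnd_horiz (Or.inr rfl) hyy.symm (by omega) hcov' hb₁
    · -- both left-boundary: p₁ = p₂, contradiction
      exfalso
      rcases lt_or_gt_of_ne hx12 with h | h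
      · exact hb₂ (by rw [hyy]; exact hcov (p₂.1 + -1) (by omega) (by omega))
      · exact hb₁ (hcov (p₁.1 + -1) (by omega) (by omega))
  obtain ⟨hG12, hG21⟩ := hboth
  have hw1 : wR (GLarge B ↑VL) p₁ (some p₂) < wR (GLarge B ↑VL) p₁ (f p₁) := by
    rw [he₁]
    simp only [wR]
    rw [if_pos hG12, if_neg hinv₁.2]
    omega
  have hw2 : wR (GLarge B ↑VL) p₂ (some p₁) < wR (GLarge B ↑VL) p₂ (f p₂) := by
    rw [he₂]
    simp only [wR]
    rw [if_pos hG21, if_neg hinv₂.2]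
    omega
  by_cases hpath : ∀ n, (ostep f)^[n] (some p₂) ≠ some p₁
  · exact aux_swap VL _ _ f hmin p₁ p₂ hp₁ hp₂ (Or.inl hG12) hw1 hpath
  · push_neg at hpath
    obtain ⟨n, hn⟩ := hpath
    have hpath' : ∀ m, (ostep f)^[m] (some p₁) ≠ some p₂ := by
      intro m hm
      have hpos : 0 < m + n := by
        rcases Nat.eq_zero_or_pos (m + n) with h | h
        · have hn0 : n = 0 := by omega
          subst hn0
          exact (hpne (Option.some.inj hn).symm).elim
        · exact h
      obtain ⟨N, hN⟩ := hmin.1.2 p₁ hp₁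
      exact aux_cycle_absurd f p₁ p₂ m n N hm hn hpos hN
    exact aux_swap VL _ _ f hmin p₂ p₁ hp₂ hp₁ (Or.inl hG21) hw2 hpath'
end

section
/- Let φ be a map from the pixels of the k-scaled board B^(k) to the pixels of B sending each sub-pixel to its super-pixel. If the extended full tilt graph of B^(k) has a spanning arborescence converging to its root of weight w, then the extended full tilt graph of B has a spanning arborescence converging to its root of weight at most w. -/
/-- The `k`-scaled board: every pixel is replaced by a `k × k` block of
sub-pixels. -/
def scaleB (k : ℕ) (B : Finset (ℤ × ℤ)) : Finset (ℤ × ℤ) :=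
  B.biUnion fun p => ((Finset.range k) ×ˢ (Finset.range k)).image
    fun ij => ((k : ℤ) * p.1 + (ij.1 : ℤ), (k : ℤ) * p.2 + (ij.2 : ℤ))

lemma ediv_step (k : ℤ) (hk : 0 < k) (t : ℤ) : (t+1)/k = t/k ∨ (t+1)/k = t/k + 1 := by
  have h1 : t / k ≤ (t+1)/k := Int.ediv_le_ediv hk (by omega)
  have h2 : (t+1)/k ≤ t/k + 1 := by
    have : (t+1)/k ≤ (t + 1*k)/k := Int.ediv_le_ediv hk (by omega)
    rwa [Int.add_mul_ediv_right _ _ (by omega : k ≠ 0)] at this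
  omega

lemma ediv_step' (k : ℤ) (hk : 0 < k) (ε : ℤ) (hε : ε = 1 ∨ ε = -1) (t : ℤ) :
    (t+ε)/k = t/k ∨ (t+ε)/k = t/k + ε := by
  rcases hε with rfl | rfl
  · exact ediv_step k hk t
  · have := ediv_step k hk (t - 1)
    have h : t - 1 + 1 = t := by ring
    rw [h] at this
    have e : t + -1 = t - 1 := by ring
    rw [e]
    rcases this with h' | h' <;> [left; right] <;> omega

lemma ivt (s : ℕ → ℤ) : ∀ n : ℕ, (∀ i, i < n → s (i+1) = s i ∨ s (i+1) = s i + 1) →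
    ∀ x : ℤ, s 0 ≤ x → x ≤ s n → ∃ m, m ≤ n ∧ s m = x := by
  intro n
  induction n with
  | zero => intro _ x h1 h2; exact ⟨0, le_rfl, by omega⟩
  | succ n ih =>
    intro hstep x h1 h2
    by_cases hx : x ≤ s n
    · obtain ⟨m, hm, hsm⟩ := ih (fun i hi => hstep i (by omega)) x h1 hx
      exact ⟨m, by omega, hsm⟩
    · have := hstep n (by omega)
      exact ⟨n+1, le_rfl, by omega⟩

lemma seg (k : ℤ) (hk : 0 < k) (ε : ℤ) (hε : ε = 1 ∨ ε = -1) (a : ℤ) (n : ℕ) :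
    ∃ n' : ℕ, (a + n * ε) / k = a / k + n' * ε ∧
      ∀ m' : ℕ, m' ≤ n' → ∃ m : ℕ, m ≤ n ∧ (a + m * ε) / k = a / k + m' * ε := by
  rcases hε with rfl | rfl
  · have hstep : ∀ i : ℕ, (a + ((i:ℤ)+1)) / k = (a + i) / k ∨
        (a + ((i:ℤ)+1)) / k = (a + i) / k + 1 := by
      intro i
      have := ediv_step k hk (a + i)
      have e : a + ((i:ℤ)+1) = a + i + 1 := by ring
      rw [e]
      exact this
    have hmono : ∀ i : ℕ, a / k ≤ (a + (i:ℤ)) / k := by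
      intro i
      induction i with
      | zero => simp
      | succ i ih =>
        push_cast
        rcases hstep i with h | h <;> omega
    refine ⟨((a + (n:ℤ)) / k - a / k).toNat, ?_, ?_⟩
    · have := hmono n
      have e1 : a + (n:ℤ) * 1 = a + n := by ring
      rw [e1]
      omega
    · intro m' hm'
      have hn := hmono n
      have hx1 : (a + ((0:ℕ):ℤ)) / k ≤ a / k + (m':ℤ) := by
        simp only [Nat.cast_zero, add_zero]
        omega
      have hx2 : a / k + (m':ℤ) ≤ (a + (n:ℤ)) / k := by omega
      obtain ⟨m, hm, hsm⟩ := ivt (fun m : ℕ => (a + (m:ℤ)) / k) n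
        (fun i _ => by push_cast; exact hstep i) (a / k + m') hx1 hx2
      refine ⟨m, hm, ?_⟩
      try simp only at hsm
      have e1 : a + (m:ℤ) * 1 = a + m := by ring
      rw [e1]
      omega
  · have hstep : ∀ i : ℕ, -((a - ((i:ℤ)+1)) / k) = -((a - i) / k) ∨
        -((a - ((i:ℤ)+1)) / k) = -((a - i) / k) + 1 := by
      intro i
      have := ediv_step k hk (a - i - 1)
      have e : a - (i:ℤ) - 1 + 1 = a - i := by ring
      rw [e] at this
      have e2 : a - ((i:ℤ)+1) = a - i - 1 := by ring
      rw [e2]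
      omega
    have hmono : ∀ i : ℕ, -(a / k) ≤ -((a - (i:ℤ)) / k) := by
      intro i
      induction i with
      | zero => simp
      | succ i ih =>
        push_cast
        rcases hstep i with h | h <;> omega
    refine ⟨(a / k - (a - (n:ℤ)) / k).toNat, ?_, ?_⟩
    · have := hmono n
      have e1 : a + (n:ℤ) * -1 = a - n := by ring
      rw [e1]
      omega
    · intro m' hm'
      have hn := hmono n
      have hx1 : -((a - ((0:ℕ):ℤ)) / k) ≤ -(a / k) + (m':ℤ) := by
        simp only [Nat.cast_zero, sub_zero]
        omega
      have hx2 : -(a / k) + (m':ℤ) ≤ -((a - (n:ℤ)) / k) := by omega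
      obtain ⟨m, hm, hsm⟩ := ivt (fun m : ℕ => -((a - (m:ℤ)) / k)) n
        (fun i _ => by push_cast; exact hstep i) (-(a / k) + m') hx1 hx2
      refine ⟨m, hm, ?_⟩
      try simp only at hsm
      have e1 : a + (m:ℤ) * -1 = a - m := by ring
      rw [e1]
      omega

lemma mem_scaleB {k : ℕ} (hk : 1 ≤ k) (B : Finset (ℤ × ℤ)) (p : ℤ × ℤ) :
    p ∈ scaleB k B ↔ (p.1 / k, p.2 / k) ∈ B := by
  have hk0 : (0:ℤ) < k := by exact_mod_cast hk
  have hkne : (k:ℤ) ≠ 0 := by omega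
  simp only [scaleB, Finset.mem_biUnion, Finset.mem_image, Finset.mem_product,
    Finset.mem_range]
  constructor
  · rintro ⟨b, hb, ⟨i, j⟩, ⟨hi, hj⟩, rfl⟩
    have h1 : ((k:ℤ) * b.1 + (i:ℤ)) / k = b.1 := by
      rw [add_comm, Int.add_mul_ediv_left _ _ hkne,
        Int.ediv_eq_zero_of_lt (by positivity) (by exact_mod_cast hi)]
      ring
    have h2 : ((k:ℤ) * b.2 + (j:ℤ)) / k = b.2 := by
      rw [add_comm, Int.add_mul_ediv_left _ _ hkne,
        Int.ediv_eq_zero_of_lt (by positivity) (by exact_mod_cast hj)]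
      ring
    simpa [h1, h2] using hb
  · intro hb
    refine ⟨(p.1 / k, p.2 / k), hb, ((p.1 % k).toNat, (p.2 % k).toNat), ⟨?_, ?_⟩, ?_⟩
    · have h1 := Int.emod_nonneg p.1 hkne
      have h2 := Int.emod_lt_of_pos p.1 hk0
      omega
    · have h1 := Int.emod_nonneg p.2 hkne
      have h2 := Int.emod_lt_of_pos p.2 hk0
      omega
    · have e1 := Int.mul_ediv_add_emod p.1 (k:ℤ)
      have e2 := Int.mul_ediv_add_emod p.2 (k:ℤ)
      have h1 := Int.emod_nonneg p.1 hkne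
      have h2 := Int.emod_nonneg p.2 hkne
      apply Prod.ext <;> simp <;> omega

lemma tiltEnd_mapH {k : ℕ} (hk : 1 ≤ k) (B : Finset (ℤ × ℤ)) (p q : ℤ × ℤ)
    (ε : ℤ) (hε : ε = 1 ∨ ε = -1) (ht : TiltEnd (scaleB k B) p (ε, 0) q) :
    TiltEnd B (p.1 / k, p.2 / k) (ε, 0) (q.1 / k, q.2 / k) := by
  have hk0 : (0:ℤ) < k := by exact_mod_cast hk
  obtain ⟨⟨n, hq, hmem⟩, hout⟩ := ht
  have hq' : q = (p.1 + n * ε, p.2) := by rw [hq]; simp [Prod.ext_iff, nsmul_eq_mul]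
  have hq1 : q.1 = p.1 + n * ε := by rw [hq']
  have hq2 : q.2 = p.2 := by rw [hq']
  have hqB : q ∈ scaleB k B := by
    have := hmem n le_rfl; rwa [← hq] at this
  obtain ⟨n', h1, h2⟩ := seg (k:ℤ) hk0 ε hε p.1 n
  constructor
  · refine ⟨n', ?_, ?_⟩
    · have e : ((p.1 / k, p.2 / k) : ℤ × ℤ) + n' • ((ε:ℤ), 0) =
          (p.1 / k + n' * ε, p.2 / k) := by simp [Prod.ext_iff, nsmul_eq_mul]
      rw [e, Prod.ext_iff]
      exact ⟨by rw [hq1]; exact h1, by rw [hq2]⟩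
    · intro m' hm'
      obtain ⟨m, hm, hdiv⟩ := h2 m' hm'
      have hmemm := hmem m hm
      have e : p + (m : ℕ) • ((ε:ℤ), 0) = (p.1 + m * ε, p.2) := by
        simp [Prod.ext_iff, nsmul_eq_mul]
      rw [e, mem_scaleB hk] at hmemm
      have e2 : ((p.1 / k, p.2 / k) : ℤ × ℤ) + m' • ((ε:ℤ), 0) =
          (p.1 / k + m' * ε, p.2 / k) := by simp [Prod.ext_iff, nsmul_eq_mul]
      rw [e2]
      simp only at hmemm
      rwa [hdiv] at hmemm
  · intro hcon
    have e3 : ((q.1 / k, q.2 / k) : ℤ × ℤ) + ((ε:ℤ), 0) = (q.1 / k + ε, q.2 / k) := by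
      simp [Prod.ext_iff]
    rw [e3] at hcon
    have hstep := ediv_step' (k:ℤ) hk0 ε hε q.1
    have hqB' : ((q.1 / k, q.2 / k) : ℤ × ℤ) ∈ B := (mem_scaleB hk B q).mp hqB
    apply hout
    have e4 : q + ((ε:ℤ), 0) = (q.1 + ε, q.2) := by simp [Prod.ext_iff]
    rw [e4, mem_scaleB hk]
    simp only
    rcases hstep with h | h
    · rw [h]; exact hqB'
    · rw [h]; exact hcon

lemma tiltEnd_mapV {k : ℕ} (hk : 1 ≤ k) (B : Finset (ℤ × ℤ)) (p q : ℤ × ℤ)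
    (ε : ℤ) (hε : ε = 1 ∨ ε = -1) (ht : TiltEnd (scaleB k B) p (0, ε) q) :
    TiltEnd B (p.1 / k, p.2 / k) (0, ε) (q.1 / k, q.2 / k) := by
  have hk0 : (0:ℤ) < k := by exact_mod_cast hk
  obtain ⟨⟨n, hq, hmem⟩, hout⟩ := ht
  have hq' : q = (p.1, p.2 + n * ε) := by rw [hq]; simp [Prod.ext_iff, nsmul_eq_mul]
  have hq1 : q.1 = p.1 := by rw [hq']
  have hq2 : q.2 = p.2 + n * ε := by rw [hq']
  have hqB : q ∈ scaleB k B := by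
    have := hmem n le_rfl; rwa [← hq] at this
  obtain ⟨n', h1, h2⟩ := seg (k:ℤ) hk0 ε hε p.2 n
  constructor
  · refine ⟨n', ?_, ?_⟩
    · have e : ((p.1 / k, p.2 / k) : ℤ × ℤ) + n' • ((0:ℤ), ε) =
          (p.1 / k, p.2 / k + n' * ε) := by simp [Prod.ext_iff, nsmul_eq_mul]
      rw [e, Prod.ext_iff]
      exact ⟨by rw [hq1], by rw [hq2]; exact h1⟩
    · intro m' hm'
      obtain ⟨m, hm, hdiv⟩ := h2 m' hm'
      have hmemm := hmem m hm
      have e : p + (m : ℕ) • ((0:ℤ), ε) = (p.1, p.2 + m * ε) := by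
        simp [Prod.ext_iff, nsmul_eq_mul]
      rw [e, mem_scaleB hk] at hmemm
      have e2 : ((p.1 / k, p.2 / k) : ℤ × ℤ) + m' • ((0:ℤ), ε) =
          (p.1 / k, p.2 / k + m' * ε) := by simp [Prod.ext_iff, nsmul_eq_mul]
      rw [e2]
      simp only at hmemm
      rwa [hdiv] at hmemm
  · intro hcon
    have e3 : ((q.1 / k, q.2 / k) : ℤ × ℤ) + ((0:ℤ), ε) = (q.1 / k, q.2 / k + ε) := by
      simp [Prod.ext_iff]
    rw [e3] at hcon
    have hstep := ediv_step' (k:ℤ) hk0 ε hε q.2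
    have hqB' : ((q.1 / k, q.2 / k) : ℤ × ℤ) ∈ B := (mem_scaleB hk B q).mp hqB
    apply hout
    have e4 : q + ((0:ℤ), ε) = (q.1, q.2 + ε) := by simp [Prod.ext_iff]
    rw [e4, mem_scaleB hk]
    simp only
    rcases hstep with h | h
    · rw [h]; exact hqB'
    · rw [h]; exact hcon

lemma GF_map {k : ℕ} (hk : 1 ≤ k) (B : Finset (ℤ × ℤ)) (p q : ℤ × ℤ)
    (h : GF (scaleB k B) p q) : GF B (p.1 / k, p.2 / k) (q.1 / k, q.2 / k) := by
  obtain ⟨hp, d, hd, ht⟩ := h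
  refine ⟨(mem_scaleB hk B p).mp hp, d, hd, ?_⟩
  have hd' := hd
  simp only [dirs, Finset.mem_insert, Finset.mem_singleton] at hd'
  rcases hd' with rfl | rfl | rfl | rfl
  · exact tiltEnd_mapH hk B p q 1 (Or.inl rfl) ht
  · exact tiltEnd_mapH hk B p q (-1) (Or.inr rfl) ht
  · exact tiltEnd_mapV hk B p q 1 (Or.inl rfl) ht
  · exact tiltEnd_mapV hk B p q (-1) (Or.inr rfl) ht

lemma GF_mem_right {C : Finset (ℤ × ℤ)} {p q : ℤ × ℤ} (h : GF C p q) : q ∈ C := by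
  obtain ⟨_, d, _, ⟨⟨n, hq, hmem⟩, _⟩⟩ := h
  rw [hq]
  exact hmem n le_rfl

/-- If the extended full tilt graph of the `k`-scaled board `B^(k)` has a
spanning arborescence converging to its root of weight `w`, then the extended
full tilt graph of `B` has one of weight at most `w`. -/
theorem stmt12 (k : ℕ) (hk : 1 ≤ k) (B S : Finset (ℤ × ℤ)) (hS : S ⊆ B)
    (f : ℤ × ℤ → Option (ℤ × ℤ))
    (hf : IsArbOn (scaleB k B) (ExtR (GF (scaleB k B)) ↑(scaleB k S)) f) :
    ∃ g : ℤ × ℤ → Option (ℤ × ℤ),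
      IsArbOn B (ExtR (GF B) ↑S) g ∧
      weightOn B (wR (GF B)) g ≤ weightOn (scaleB k B) (wR (GF (scaleB k B))) f := by
  classical
  have hk0 : (0:ℤ) < k := by exact_mod_cast hk
  have hkne : (k:ℤ) ≠ 0 := by omega
  obtain ⟨hedge, hreach⟩ := hf
  -- every super-pixel has a sub-pixel, hence an escape count
  have hP : ∀ v ∈ B, ∃ n : ℕ, ∃ p, p ∈ scaleB k B ∧ (p.1 / (k:ℤ), p.2 / (k:ℤ)) = v ∧
      (ostep f)^[n] (some p) = none := by
    intro v hv
    have hdiv : ((((k:ℤ) * v.1, (k:ℤ) * v.2) : ℤ × ℤ).1 / (k:ℤ),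
        (((k:ℤ) * v.1, (k:ℤ) * v.2) : ℤ × ℤ).2 / (k:ℤ)) = v := by
      simp only [Int.mul_ediv_cancel_left _ hkne]
    have hmem : (((k:ℤ) * v.1, (k:ℤ) * v.2) : ℤ × ℤ) ∈ scaleB k B := by
      rw [mem_scaleB hk, hdiv]; exact hv
    obtain ⟨n, hn⟩ := hreach _ hmem
    exact ⟨n, _, hmem, hdiv, hn⟩
  set φ : ℤ × ℤ → ℤ × ℤ := fun q => (q.1 / (k:ℤ), q.2 / (k:ℤ)) with hφ
  set sel : ℤ × ℤ → ℤ × ℤ :=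
    fun v => if hv : v ∈ B then Classical.choose (Nat.find_spec (hP v hv)) else v with hsel
  have hselspec : ∀ v (hv : v ∈ B), sel v ∈ scaleB k B ∧ φ (sel v) = v ∧
      (ostep f)^[Nat.find (hP v hv)] (some (sel v)) = none := by
    intro v hv
    simp only [hsel, dif_pos hv]
    exact Classical.choose_spec (Nat.find_spec (hP v hv))
  set g : ℤ × ℤ → Option (ℤ × ℤ) := fun v => Option.map φ (f (sel v)) with hg
  -- the key per-vertex facts
  have key : ∀ v (hv : v ∈ B),
      ExtR (GF B) ↑S (some v) (g v) ∧
      wR (GF B) v (g v) ≤ wR (GF (scaleB k B)) (sel v) (f (sel v)) ∧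
      ∀ u, g v = some u → ∃ hu : u ∈ B, Nat.find (hP u hu) < Nat.find (hP v hv) := by
    intro v hv
    obtain ⟨hselB, hselφ, hiter⟩ := hselspec v hv
    have hedgev := hedge (sel v) hselB
    rcases hfs : f (sel v) with _ | q
    · rw [hfs] at hedgev
      have hgv : g v = none := by rw [hg]; simp [hfs]
      have hvS : v ∈ S := by
        have h1 : sel v ∈ scaleB k S := Finset.mem_coe.mp hedgev
        rw [mem_scaleB hk] at h1
        rwa [show ((sel v).1 / (k:ℤ), (sel v).2 / (k:ℤ)) = φ (sel v) from rfl, hselφ] at h1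
      refine ⟨?_, ?_, ?_⟩
      · rw [hgv]; exact Finset.mem_coe.mpr hvS
      · rw [hgv]
        exact le_refl 0
      · intro u hu; rw [hgv] at hu; exact absurd hu (by simp)
    · rw [hfs] at hedgev
      have hgv : g v = some (φ q) := by rw [hg]; simp [hfs]
      have hqBk : q ∈ scaleB k B := by
        rcases hedgev with h | ⟨h, _⟩
        · exact GF_mem_right h
        · exact h.1
      have hqB : φ q ∈ B := by
        rw [mem_scaleB hk] at hqBk; exact hqBk
      have hrank : ∀ u, g v = some u → ∃ hu : u ∈ B,
          Nat.find (hP u hu) < Nat.find (hP v hv) := by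
        intro u hu
        rw [hgv] at hu
        obtain rfl : φ q = u := by injection hu
        refine ⟨hqB, ?_⟩
        set N := Nat.find (hP v hv) with hN
        have hN0 : N ≠ 0 := by
          intro h0
          rw [h0] at hiter
          simp at hiter
        have hiter' : (ostep f)^[N - 1] (some q) = none := by
          have e : N = (N - 1) + 1 := by omega
          rw [e, Function.iterate_succ_apply] at hiter
          have e2 : ostep f (some (sel v)) = f (sel v) := rfl
          rwa [e2, hfs] at hiter
        have hPq : ∃ p, p ∈ scaleB k B ∧ (p.1 / (k:ℤ), p.2 / (k:ℤ)) = φ q ∧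
            (ostep f)^[N - 1] (some p) = none := ⟨q, hqBk, rfl, hiter'⟩
        have hle : Nat.find (hP (φ q) hqB) ≤ N - 1 := Nat.find_le hPq
        omega
      rcases hedgev with h | ⟨h, hn⟩
      · have hGFB : GF B v (φ q) := by
          have := GF_map hk B (sel v) q h
          rwa [show ((sel v).1 / (k:ℤ), (sel v).2 / (k:ℤ)) = φ (sel v) from rfl, hselφ] at this
        refine ⟨?_, ?_, hrank⟩
        · rw [hgv]; exact Or.inl hGFB
        · have e1 : wR (GF B) v (some (φ q)) = if GF B v (φ q) then 0 else 1 := rfl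
          rw [hgv, e1, if_pos hGFB]
          exact Nat.zero_le _
      · have hGFB : GF B (φ q) v := by
          have := GF_map hk B q (sel v) h
          rwa [show ((sel v).1 / (k:ℤ), (sel v).2 / (k:ℤ)) = φ (sel v) from rfl, hselφ,
            show (q.1 / (k:ℤ), q.2 / (k:ℤ)) = φ q from rfl] at this
        have e1 : wR (GF B) v (some (φ q)) = if GF B v (φ q) then 0 else 1 := rfl
        have e2 : wR (GF (scaleB k B)) (sel v) (some q) =
            if GF (scaleB k B) (sel v) q then 0 else 1 := rfl
        refine ⟨?_, ?_, hrank⟩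
        · rw [hgv]
          by_cases hvq : GF B v (φ q)
          · exact Or.inl hvq
          · exact Or.inr ⟨hGFB, hvq⟩
        · rw [hgv, e1, e2, if_neg hn]
          split <;> omega
  refine ⟨g, ⟨fun v hv => (key v hv).1, ?_⟩, ?_⟩
  · -- reachability by induction on rank
    have main : ∀ N : ℕ, ∀ v, ∀ hv : v ∈ B, Nat.find (hP v hv) ≤ N →
        ∃ n : ℕ, (ostep g)^[n] (some v) = none := by
      intro N
      induction N with
      | zero =>
        intro v hv hle
        rcases hgv : g v with _ | u
        · exact ⟨1, by simp [Function.iterate_one, ostep, hgv]⟩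
        · obtain ⟨hu, hlt⟩ := (key v hv).2.2 u hgv
          omega
      | succ N ih =>
        intro v hv hle
        rcases hgv : g v with _ | u
        · exact ⟨1, by simp [Function.iterate_one, ostep, hgv]⟩
        · obtain ⟨hu, hlt⟩ := (key v hv).2.2 u hgv
          obtain ⟨n, hn⟩ := ih u hu (by omega)
          refine ⟨n + 1, ?_⟩
          rw [Function.iterate_succ_apply]
          have e : ostep g (some v) = g v := rfl
          rw [e, hgv]
          exact hn
    intro v hv
    exact main (Nat.find (hP v hv)) v hv le_rfl
  · -- weight comparison
    have hinj : Set.InjOn sel ↑B := by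
      intro a ha b hb hab
      have h1 := (hselspec a ha).2.1
      have h2 := (hselspec b hb).2.1
      rw [← h1, ← h2, hab]
    calc weightOn B (wR (GF B)) g
        ≤ ∑ v ∈ B, wR (GF (scaleB k B)) (sel v) (f (sel v)) := by
          apply Finset.sum_le_sum
          intro v hv
          exact (key v hv).2.1
      _ = ∑ p ∈ B.image sel, wR (GF (scaleB k B)) p (f p) := by
          rw [Finset.sum_image (fun a ha b hb => hinj ha hb)]
      _ ≤ weightOn (scaleB k B) (wR (GF (scaleB k B))) f := by
          apply Finset.sum_le_sum_of_subset
          intro p hp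
          obtain ⟨v, hv, rfl⟩ := Finset.mem_image.mp hp
          exact (hselspec v hv).1
end
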